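/- Let R be a commutative local ring and let N_1, N_2, N_3 be finite R-modules, each with minimal number of generators equal to d, together with surjections π_1: N_1 → N_3 and π_2: N_2 → N_3. Suppose there exists a finite R-module N̄ with |N̄| > |N_3|, together with surjections q_1: N_1 → N̄ and q_2: N_2 → N̄ and a surjection s: N̄ → N_3 such that s ∘ q_1 = π_1 and s ∘ q_2 = π_2. Then the fiber product N_1 ×_{N_3} N_2 = {(x,y) ∈ N_1 × N_2 : π_1(x) = π_2(y)} has minimal number of generators strictly greater than d. -/

import Mathlib

/-- The minimal number of generators of a module. -/
noncomputable def minNumGen (R M : Type*) [Semiring R] [AddCommMonoid M] [Module R M] : ℕ :=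
  sInf {n : ℕ | ∃ s : Finset M, s.card = n ∧ Submodule.span R (s : Set M) = ⊤}

open Submodule IsLocalRing Module

section Aux

attribute [local instance] Ideal.Quotient.field

variable {R : Type*} [CommRing R] [IsLocalRing R]

theorem minNumGen_exists (M : Type*) [AddCommGroup M] [Module R M] [Finite M] :
    ∃ s : Finset M, s.card = minNumGen R M ∧ Submodule.span R (s : Set M) = ⊤ := by
  classical
  have hne : {n : ℕ | ∃ s : Finset M, s.card = n ∧ Submodule.span R (s : Set M) = ⊤}.Nonempty :=
    ⟨_, (Set.finite_univ (α := M)).toFinset, rfl, by simp⟩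
  obtain ⟨s, hc, hs⟩ := Nat.sInf_mem hne
  exact ⟨s, hc, hs⟩

theorem minNumGen_le_card {M : Type*} [AddCommGroup M] [Module R M] {s : Finset M}
    (h : Submodule.span R (s : Set M) = ⊤) : minNumGen R M ≤ s.card :=
  Nat.sInf_le ⟨s, rfl, h⟩

theorem minNumGen_le_of_surjective {M N : Type*} [AddCommGroup M] [Module R M] [Finite M]
    [AddCommGroup N] [Module R N] (f : M →ₗ[R] N) (hf : Function.Surjective f) :
    minNumGen R N ≤ minNumGen R M := by
  classical
  obtain ⟨s, hc, hs⟩ := minNumGen_exists (R := R) M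
  have hspan : Submodule.span R ((s.image f : Finset N) : Set N) = ⊤ := by
    rw [Finset.coe_image, ← Submodule.map_span, hs, Submodule.map_top,
      LinearMap.range_eq_top.mpr hf]
  exact le_trans (minNumGen_le_card hspan) (le_trans Finset.card_image_le hc.le)

local instance instTower (M : Type*) [AddCommGroup M] [Module R M] :
    IsScalarTower R (R ⧸ maximalIdeal R) (M ⧸ (maximalIdeal R • ⊤ : Submodule R M)) :=
  Module.IsTorsionBySet.isScalarTower _

theorem algebraMap_res_surj : Function.Surjective (algebraMap R (R ⧸ maximalIdeal R)) := by
  rw [Ideal.Quotient.algebraMap_eq]; exact Ideal.Quotient.mk_surjective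

theorem finrank_le_minNumGen (M : Type*) [AddCommGroup M] [Module R M] [Finite M] :
    finrank (R ⧸ maximalIdeal R) (M ⧸ (maximalIdeal R • ⊤ : Submodule R M)) ≤ minNumGen R M := by
  classical
  obtain ⟨s, hc, hs⟩ := minNumGen_exists (R := R) M
  set k := R ⧸ maximalIdeal R
  set p : Submodule R M := maximalIdeal R • ⊤ with hp
  set t : Finset (M ⧸ p) := s.image p.mkQ with ht
  have h1 : Submodule.span R (t : Set (M ⧸ p)) = ⊤ := by
    rw [ht, Finset.coe_image, ← Submodule.map_span, hs, Submodule.map_top, Submodule.range_mkQ]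
  have htop : Submodule.span k (t : Set (M ⧸ p)) = ⊤ := by
    rw [← restrictScalars_eq_top_iff (S := R),
      Submodule.restrictScalars_span R k algebraMap_res_surj, h1]
  calc finrank k (M ⧸ p) = finrank k (⊤ : Submodule k (M ⧸ p)) := (finrank_top _ _).symm
    _ = finrank k (Submodule.span k (t : Set (M ⧸ p))) := by rw [htop]
    _ ≤ t.card := finrank_span_finset_le_card t
    _ ≤ s.card := Finset.card_image_le
    _ = minNumGen R M := hc

theorem minNumGen_le_finrank (M : Type*) [AddCommGroup M] [Module R M] [Finite M] :
    minNumGen R M ≤ finrank (R ⧸ maximalIdeal R) (M ⧸ (maximalIdeal R • ⊤ : Submodule R M)) := by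
  classical
  set k := R ⧸ maximalIdeal R
  set p : Submodule R M := maximalIdeal R • ⊤ with hp
  set n := finrank k (M ⧸ p) with hn
  have hfinq : Finite (M ⧸ p) := Quotient.finite _
  have hmf : Module.Finite k (M ⧸ p) := Module.Finite.of_finite
  let b := Module.finBasis k (M ⧸ p)
  choose g hg using fun i => p.mkQ_surjective (b i)
  set t : Finset M := Finset.image g Finset.univ with htdef
  have hcomp : p.mkQ ∘ g = b := funext hg
  have himg : p.mkQ '' (t : Set M) = Set.range b := by
    rw [htdef, Finset.coe_image, Finset.coe_univ, Set.image_univ, ← Set.range_comp, hcomp]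
  have hmap : Submodule.map p.mkQ (Submodule.span R (t : Set M)) = ⊤ := by
    rw [Submodule.map_span, himg, ← Submodule.restrictScalars_span R k algebraMap_res_surj,
      b.span_eq, restrictScalars_top]
  have hsup : (⊤ : Submodule R M) ≤ Submodule.span R (t : Set M) ⊔ maximalIdeal R • ⊤ := by
    have := Submodule.comap_map_mkQ p (Submodule.span R (t : Set M))
    rw [hmap, Submodule.comap_top] at this
    rw [← hp, sup_comm]
    exact this.le
  have hspan : Submodule.span R (t : Set M) = ⊤ :=
    le_antisymm le_top (Submodule.le_of_le_smul_of_le_jacobson_bot Module.Finite.fg_top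
      (IsLocalRing.jacobson_eq_maximalIdeal ⊥ bot_ne_top).ge hsup)
  calc minNumGen R M ≤ t.card := minNumGen_le_card hspan
    _ ≤ Finset.univ.card := Finset.card_image_le
    _ = n := by simp [hn]

theorem minNumGen_eq_finrank (M : Type*) [AddCommGroup M] [Module R M] [Finite M] :
    minNumGen R M = finrank (R ⧸ maximalIdeal R) (M ⧸ (maximalIdeal R • ⊤ : Submodule R M)) :=
  le_antisymm (minNumGen_le_finrank M) (finrank_le_minNumGen M)

theorem exists_not_mem_smul_top (K : Type*) [AddCommGroup K] [Module R K] [Finite K]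
    [Nontrivial K] : ∃ w : K, w ∉ (maximalIdeal R • ⊤ : Submodule R K) := by
  have hne : (⊤ : Submodule R K) ≠ maximalIdeal R • ⊤ :=
    Submodule.top_ne_ideal_smul_of_le_jacobson_annihilator
      (le_trans (IsLocalRing.jacobson_eq_maximalIdeal ⊥ bot_ne_top).ge
        (Ideal.jacobson_mono bot_le))
  by_contra h
  push_neg at h
  exact hne (top_le_iff.mp (fun x _ => h x)).symm

theorem minNumGen_prod_succ (M K : Type*) [AddCommGroup M] [Module R M] [Finite M]
    [AddCommGroup K] [Module R K] [Finite K] [Nontrivial K] :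
    minNumGen R M + 1 ≤ minNumGen R (M × K) := by
  classical
  rw [minNumGen_eq_finrank M, minNumGen_eq_finrank (M × K)]
  set k := R ⧸ maximalIdeal R
  set pM : Submodule R M := maximalIdeal R • ⊤ with hpM
  set pP : Submodule R (M × K) := maximalIdeal R • ⊤ with hpP
  have hle : pP ≤ LinearMap.ker (pM.mkQ ∘ₗ LinearMap.fst R M K) := by
    rw [LinearMap.ker_comp, Submodule.ker_mkQ, ← Submodule.map_le_iff_le_comap,
      Submodule.map_smul'', Submodule.map_top]
    exact Submodule.smul_mono le_rfl le_top
  let f0 : (M × K) ⧸ pP →ₗ[R] M ⧸ pM := Submodule.liftQ pP _ hle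
  let f : ((M × K) ⧸ pP) →ₗ[k] (M ⧸ pM) := f0.extendScalarsOfSurjective algebraMap_res_surj
  have hfinq1 : Finite ((M × K) ⧸ pP) := Quotient.finite _
  have hfinq2 : Finite (M ⧸ pM) := Quotient.finite _
  have hmf1 : Module.Finite k ((M × K) ⧸ pP) := Module.Finite.of_finite
  have hmf2 : Module.Finite k (M ⧸ pM) := Module.Finite.of_finite
  have hfsurj : Function.Surjective f := by
    intro x
    obtain ⟨m, rfl⟩ := pM.mkQ_surjective x
    exact ⟨Submodule.Quotient.mk (m, 0), rfl⟩
  obtain ⟨w, hw⟩ := exists_not_mem_smul_top (R := R) K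
  set v : (M × K) ⧸ pP := Submodule.Quotient.mk (0, w) with hv
  have hv0 : f v = 0 := by
    have : f v = pM.mkQ ((0, w) : M × K).1 := rfl
    simp [this]
  have hvne : v ≠ 0 := by
    intro h
    rw [hv, Submodule.Quotient.mk_eq_zero] at h
    have h2 := Submodule.mem_map_of_mem (f := LinearMap.snd R M K) h
    rw [hpP, Submodule.map_smul'', Submodule.map_top, LinearMap.range_eq_top.mpr
      (Prod.snd_surjective (α := M) (β := K))] at h2
    exact hw h2
  have hker : 1 ≤ finrank k (LinearMap.ker f) := by
    rcases Nat.eq_zero_or_pos (finrank k (LinearMap.ker f)) with h | h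
    · rw [Submodule.finrank_eq_zero] at h
      exact absurd (h ▸ (LinearMap.mem_ker.mpr hv0)) (by simpa using hvne)
    · exact h
  have hrn := LinearMap.finrank_range_add_finrank_ker f
  rw [LinearMap.range_eq_top.mpr hfsurj, finrank_top] at hrn
  show finrank k (M ⧸ pM) + 1 ≤ finrank k ((M × K) ⧸ pP)
  omega

end Aux

theorem stmt_7 (R : Type*) [CommRing R] [IsLocalRing R]
    (N₁ N₂ N₃ NBar : Type*) [AddCommGroup N₁] [Module R N₁] [Finite N₁]
    [AddCommGroup N₂] [Module R N₂] [Finite N₂]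
    [AddCommGroup N₃] [Module R N₃] [Finite N₃]
    [AddCommGroup NBar] [Module R NBar] [Finite NBar]
    (d : ℕ)
    (π₁ : N₁ →ₗ[R] N₃) (hπ₁ : Function.Surjective π₁)
    (π₂ : N₂ →ₗ[R] N₃) (hπ₂ : Function.Surjective π₂)
    (h₁ : minNumGen R N₁ = d) (h₂ : minNumGen R N₂ = d) (h₃ : minNumGen R N₃ = d)
    (hcard : Nat.card N₃ < Nat.card NBar)
    (q₁ : N₁ →ₗ[R] NBar) (hq₁ : Function.Surjective q₁)
    (q₂ : N₂ →ₗ[R] NBar) (hq₂ : Function.Surjective q₂)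
    (s : NBar →ₗ[R] N₃) (hs : Function.Surjective s)
    (hsq₁ : s.comp q₁ = π₁) (hsq₂ : s.comp q₂ = π₂) :
    d < minNumGen R
      ↥(LinearMap.ker (π₁.comp (LinearMap.fst R N₁ N₂) - π₂.comp (LinearMap.snd R N₁ N₂))) := by
  classical
  set F := LinearMap.ker (π₁.comp (LinearMap.fst R N₁ N₂) - π₂.comp (LinearMap.snd R N₁ N₂))
    with hF
  have hntk : Nontrivial ↥(LinearMap.ker s) := by
    rw [Submodule.nontrivial_iff_ne_bot]
    intro h
    have hinj : Function.Injective s := LinearMap.ker_eq_bot.mp h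
    have := Nat.card_eq_of_bijective s ⟨hinj, hs⟩
    omega
  have hmem : ∀ z : ↥F,
      ((q₁.comp ((LinearMap.fst R N₁ N₂).comp F.subtype)) -
        (q₂.comp ((LinearMap.snd R N₁ N₂).comp F.subtype))) z ∈ LinearMap.ker s := by
    intro z
    have hz := z.2
    simp only [hF, LinearMap.mem_ker, LinearMap.sub_apply, LinearMap.comp_apply,
      LinearMap.fst_apply, LinearMap.snd_apply, Submodule.coe_subtype] at hz ⊢
    rw [map_sub, ← LinearMap.comp_apply s q₁, hsq₁, ← LinearMap.comp_apply s q₂, hsq₂]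
    exact hz
  let Φ : ↥F →ₗ[R] N₁ × ↥(LinearMap.ker s) :=
    LinearMap.prod ((LinearMap.fst R N₁ N₂).comp F.subtype)
      (LinearMap.codRestrict (LinearMap.ker s) _ hmem)
  have hΦ : Function.Surjective Φ := by
    rintro ⟨x, w, hwmem⟩
    obtain ⟨y, hy⟩ := hq₂ (q₁ x - w)
    have hxy : ((x, y) : N₁ × N₂) ∈ F := by
      simp only [hF, LinearMap.mem_ker, LinearMap.sub_apply, LinearMap.comp_apply,
        LinearMap.fst_apply, LinearMap.snd_apply, sub_eq_zero]
      have hπ₂y : π₂ y = s (q₂ y) := by rw [← hsq₂]; rfl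
      have hπ₁x : π₁ x = s (q₁ x) := by rw [← hsq₁]; rfl
      rw [hπ₂y, hy, map_sub, LinearMap.mem_ker.mp hwmem, sub_zero, hπ₁x]
    refine ⟨⟨(x, y), hxy⟩, ?_⟩
    apply Prod.ext
    · rfl
    · apply Subtype.ext
      show q₁ x - q₂ y = w
      rw [hy, sub_sub_cancel]
  have h5 : minNumGen R (N₁ × ↥(LinearMap.ker s)) ≤ minNumGen R ↥F :=
    minNumGen_le_of_surjective Φ hΦ
  have h6 := minNumGen_prod_succ (R := R) N₁ ↥(LinearMap.ker s)
  omega
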